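/- Consider the Newtonian 1+5 coorbital problem (s = 3) with angles satisfying −π/2 < θ₅ < θ₄ < θ₃ < θ₂ < θ₁ < π/2 (a convex configuration). If the masses satisfy m₁ = m₅ > 0, m₂ = m₄ > 0, m₃ > 0 and F m = 0, then θ₂ − θ₃ = θ₃ − θ₄ and θ₁ − θ₂ = θ₄ − θ₅ (equivalently θ₁ − θ₃ = θ₃ − θ₅); i.e., the configuration is symmetric about the axis through the central mass and the third point. -/

import Mathlib

open Real Matrix

/-- `f_s(θ) = sin(θ)·(2^{-s}|sin(θ/2)|^{-s} − 1)`, the coorbital kernel function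
for a homogeneous potential with exponent `s`. -/
noncomputable def coorbitalF (s θ : ℝ) : ℝ :=
  Real.sin θ * ((2 : ℝ) ^ (-s) * |Real.sin (θ / 2)| ^ (-s) - 1)

noncomputable def Ft (θ : ℝ) : ℝ :=
  Real.cos (θ / 2) / (4 * Real.sin (θ / 2) ^ 2) - Real.sin θ

noncomputable def Ft' (θ : ℝ) : ℝ :=
  -(1 + Real.cos (θ / 2) ^ 2) / (8 * Real.sin (θ / 2) ^ 3) - Real.cos θ

lemma coorbitalF_zero (s : ℝ) : coorbitalF s 0 = 0 := by simp [coorbitalF]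

lemma coorbitalF_odd (s x y : ℝ) : coorbitalF s (x - y) = - coorbitalF s (y - x) := by
  have h : x - y = -(y - x) := by ring
  rw [coorbitalF, coorbitalF, h, Real.sin_neg, neg_div, Real.sin_neg, abs_neg]
  ring

lemma coorbitalF_eq_Ft {θ : ℝ} (h0 : 0 < θ) (hπ : θ < π) : coorbitalF 3 θ = Ft θ := by
  have hs : 0 < Real.sin (θ / 2) :=
    Real.sin_pos_of_pos_of_lt_pi (by linarith) (by linarith [Real.pi_pos])
  have h2 : (2 : ℝ) ^ (-(3:ℝ)) = 1 / 8 := by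
    rw [Real.rpow_neg (by norm_num), show (3:ℝ) = ((3:ℕ):ℝ) by norm_num,
      Real.rpow_natCast]
    norm_num
  have h3 : Real.sin (θ/2) ^ (-(3:ℝ)) = (Real.sin (θ/2) ^ (3:ℕ))⁻¹ := by
    rw [Real.rpow_neg hs.le, show (3:ℝ) = ((3:ℕ):ℝ) by norm_num, Real.rpow_natCast]
  have hsin : Real.sin θ = 2 * Real.sin (θ/2) * Real.cos (θ/2) := by
    rw [show θ = 2 * (θ/2) by ring, Real.sin_two_mul]
    ring_nf
  rw [coorbitalF, Ft, abs_of_pos hs, h2, h3, hsin]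
  field_simp
  ring

lemma hasDerivAt_Ft {θ : ℝ} (hs : Real.sin (θ / 2) ≠ 0) : HasDerivAt Ft (Ft' θ) θ := by
  have h1 : HasDerivAt (fun t : ℝ => t / 2) (1 / 2) θ := by
    simpa using (hasDerivAt_id θ).div_const 2
  have hcos : HasDerivAt (fun t : ℝ => Real.cos (t / 2)) (-Real.sin (θ/2) * (1/2)) θ :=
    by have := (Real.hasDerivAt_cos (θ/2)).comp θ h1; exact this
  have hsin2 : HasDerivAt (fun t : ℝ => Real.sin (t / 2)) (Real.cos (θ/2) * (1/2)) θ :=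
    by have := (Real.hasDerivAt_sin (θ/2)).comp θ h1; exact this
  have hden : HasDerivAt (fun t : ℝ => 4 * Real.sin (t / 2) ^ 2)
      (4 * ((2:ℕ) * Real.sin (θ/2) ^ 1 * (Real.cos (θ/2) * (1/2)))) θ :=
    (hsin2.pow 2).const_mul 4
  have hden0 : 4 * Real.sin (θ/2) ^ 2 ≠ 0 := by positivity
  have hquot := hcos.div hden hden0
  have h := hquot.sub (Real.hasDerivAt_sin θ)
  refine HasDerivAt.congr_deriv h ?_
  symm
  rw [Ft']
  have hpyth := Real.sin_sq_add_cos_sq (θ/2)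
  field_simp
  linear_combination 8 * hpyth

lemma Ft'_add_neg {α β : ℝ} (hα0 : 0 < α) (hβ0 : 0 < β) (hsum : α + β < π) :
    Ft' α + Ft' β < 0 := by
  have hπ := Real.pi_pos
  have hsα : 0 < Real.sin (α / 2) :=
    Real.sin_pos_of_pos_of_lt_pi (by linarith) (by linarith)
  have hsβ : 0 < Real.sin (β / 2) :=
    Real.sin_pos_of_pos_of_lt_pi (by linarith) (by linarith)
  have hcos : Real.cos α + Real.cos β =
      2 * Real.cos ((α + β) / 2) * Real.cos ((α - β) / 2) := Real.cos_add_cos α β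
  have hc1 : 0 < Real.cos ((α + β) / 2) :=
    Real.cos_pos_of_mem_Ioo ⟨by linarith, by linarith⟩
  have hc2 : 0 < Real.cos ((α - β) / 2) :=
    Real.cos_pos_of_mem_Ioo ⟨by linarith, by linarith⟩
  have ht1 : 0 < (1 + Real.cos (α / 2) ^ 2) / (8 * Real.sin (α / 2) ^ 3) := by positivity
  have ht2 : 0 < (1 + Real.cos (β / 2) ^ 2) / (8 * Real.sin (β / 2) ^ 3) := by positivity
  have : 0 < Real.cos α + Real.cos β := by rw [hcos]; positivity
  rw [Ft', Ft']
  have e1 : -(1 + Real.cos (α / 2) ^ 2) / (8 * Real.sin (α / 2) ^ 3)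
      = -((1 + Real.cos (α / 2) ^ 2) / (8 * Real.sin (α / 2) ^ 3)) := by ring
  have e2 : -(1 + Real.cos (β / 2) ^ 2) / (8 * Real.sin (β / 2) ^ 3)
      = -((1 + Real.cos (β / 2) ^ 2) / (8 * Real.sin (β / 2) ^ 3)) := by ring
  rw [e1, e2]
  linarith

lemma strictAnti_h {T : ℝ} (hT0 : 0 < T) (hTπ : T < π) :
    StrictAntiOn (fun x => coorbitalF 3 x - coorbitalF 3 (T - x)) (Set.Ioo 0 T) := by
  have key : StrictAntiOn (fun x => Ft x - Ft (T - x)) (Set.Ioo 0 T) := by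
    have hder : ∀ x ∈ Set.Ioo (0:ℝ) T,
        HasDerivAt (fun x => Ft x - Ft (T - x)) (Ft' x + Ft' (T - x)) x := by
      intro x hx
      have hsx : Real.sin (x / 2) ≠ 0 :=
        (Real.sin_pos_of_pos_of_lt_pi (by linarith [hx.1] : (0:ℝ) < x/2)
          (by linarith [hx.2, Real.pi_pos])).ne'
      have hsy : Real.sin ((T - x) / 2) ≠ 0 :=
        (Real.sin_pos_of_pos_of_lt_pi (by linarith [hx.2] : (0:ℝ) < (T-x)/2)
          (by linarith [hx.1, Real.pi_pos])).ne'
      have hinner : HasDerivAt (fun t : ℝ => T - t) (-1) x := by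
        exact (hasDerivAt_id x).const_sub T
      have h2 : HasDerivAt (fun t : ℝ => Ft (T - t)) (Ft' (T - x) * (-1)) x :=
        (hasDerivAt_Ft hsy).comp x hinner
      have := (hasDerivAt_Ft hsx).sub h2
      refine HasDerivAt.congr_deriv this ?_
      ring
    apply strictAntiOn_of_deriv_neg (convex_Ioo 0 T)
    · exact fun x hx => ((hder x hx).differentiableAt).continuousAt.continuousWithinAt
    · intro x hx
      rw [interior_Ioo] at hx
      rw [(hder x hx).deriv]
      exact Ft'_add_neg hx.1 (by linarith [hx.2]) (by linarith)
  intro x hx y hy hxy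
  have ex : ∀ z ∈ Set.Ioo (0:ℝ) T,
      coorbitalF 3 z - coorbitalF 3 (T - z) = Ft z - Ft (T - z) := by
    intro z hz
    rw [coorbitalF_eq_Ft hz.1 (by linarith [hz.2]),
      coorbitalF_eq_Ft (by linarith [hz.2]) (by linarith [hz.1])]
  simp only
  rw [ex x hx, ex y hy]
  exact key hx hy hxy

lemma order_key {T x y : ℝ} (hTπ : T < π) (hx : x ∈ Set.Ioo 0 T) (hy : y ∈ Set.Ioo 0 T)
    (h : coorbitalF 3 y - coorbitalF 3 (T - y) ≤ coorbitalF 3 x - coorbitalF 3 (T - x)) :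
    x ≤ y := by
  by_contra hlt
  push_neg at hlt
  have := strictAnti_h (hx.1.trans hx.2) hTπ hy hx hlt
  simp only at this
  linarith

/-- Newtonian 1+5 coorbital problem (`s = 3`) with a convex configuration
`−π/2 < θ₅ < θ₄ < θ₃ < θ₂ < θ₁ < π/2`.  If the masses satisfy `m₁ = m₅ > 0`,
`m₂ = m₄ > 0`, `m₃ > 0` and `F m = 0` (where `Fᵢⱼ = f₃(θᵢ − θⱼ)`), then
`θ₂ − θ₃ = θ₃ − θ₄` and `θ₁ − θ₂ = θ₄ − θ₅`; i.e. the configuration is symmetric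
about the axis through the central mass and the third point. -/
theorem symmetric_masses_imply_symmetric_one_plus_five
    (θ₁ θ₂ θ₃ θ₄ θ₅ : ℝ) (h₅ : -(π / 2) < θ₅) (h₅₄ : θ₅ < θ₄) (h₄₃ : θ₄ < θ₃)
    (h₃₂ : θ₃ < θ₂) (h₂₁ : θ₂ < θ₁) (h₁ : θ₁ < π / 2)
    (m : Fin 5 → ℝ) (hm15 : m 0 = m 4) (hm24 : m 1 = m 3)
    (hm1 : 0 < m 0) (hm2 : 0 < m 1) (hm3 : 0 < m 2)
    (hF : (Matrix.of fun i j : Fin 5 =>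
        coorbitalF 3 (![θ₁, θ₂, θ₃, θ₄, θ₅] i - ![θ₁, θ₂, θ₃, θ₄, θ₅] j)).mulVec m
      = 0) :
    θ₂ - θ₃ = θ₃ - θ₄ ∧ θ₁ - θ₂ = θ₄ - θ₅ := by
  
  have hπ := Real.pi_pos
  have e2 := congrFun hF 1
  have e3 := congrFun hF 2
  have e4 := congrFun hF 3
  simp only [Matrix.mulVec, dotProduct, Fin.sum_univ_five, Matrix.of_apply,
    Matrix.cons_val_zero, Matrix.cons_val_one, Matrix.head_cons, Matrix.cons_val_two,
    Matrix.tail_cons, Matrix.cons_val_three, Matrix.cons_val_four, Matrix.head_fin_const,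
    sub_self, coorbitalF_zero, zero_mul, add_zero, zero_add, Pi.zero_apply] at e2 e3 e4
  rw [coorbitalF_odd 3 θ₂ θ₁, ← hm15, ← hm24] at e2
  rw [coorbitalF_odd 3 θ₃ θ₁, coorbitalF_odd 3 θ₃ θ₂, ← hm15, ← hm24] at e3
  rw [coorbitalF_odd 3 θ₄ θ₁, coorbitalF_odd 3 θ₄ θ₂, coorbitalF_odd 3 θ₄ θ₃,
    ← hm15] at e4
  -- notation
  set f12 := coorbitalF 3 (θ₁ - θ₂) with hf12
  set f13 := coorbitalF 3 (θ₁ - θ₃) with hf13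
  set f14 := coorbitalF 3 (θ₁ - θ₄) with hf14
  set f23 := coorbitalF 3 (θ₂ - θ₃) with hf23
  set f24 := coorbitalF 3 (θ₂ - θ₄) with hf24
  set f25 := coorbitalF 3 (θ₂ - θ₅) with hf25
  set f34 := coorbitalF 3 (θ₃ - θ₄) with hf34
  set f35 := coorbitalF 3 (θ₃ - θ₅) with hf35
  set f45 := coorbitalF 3 (θ₄ - θ₅) with hf45
  rcases le_total 0 (f23 - f34) with hR | hR
  · -- f34 ≤ f23
    have key1 : m 0 * (f35 - f13) = m 1 * (f23 - f34) := by linear_combination e3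
    have key2 : m 0 * (f12 + f14 - f25 - f45) = m 2 * (f23 - f34) := by
      linear_combination -e2 - e4
    have hQ : 0 ≤ f35 - f13 := by
      have h' : m 0 * 0 ≤ m 0 * (f35 - f13) := by
        rw [mul_zero, key1]; exact mul_nonneg hm2.le hR
      exact le_of_mul_le_mul_left h' hm1
    have hP : 0 ≤ f12 + f14 - f25 - f45 := by
      have h' : m 0 * 0 ≤ m 0 * (f12 + f14 - f25 - f45) := by
        rw [mul_zero, key2]; exact mul_nonneg hm3.le hR
      exact le_of_mul_le_mul_left h' hm1
    have h1 : θ₂ - θ₃ ≤ θ₃ - θ₄ := by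
      refine order_key (T := θ₂ - θ₄) (by linarith) ⟨by linarith, by linarith⟩
        ⟨by linarith, by linarith⟩ ?_
      rw [show θ₂ - θ₄ - (θ₃ - θ₄) = θ₂ - θ₃ from by ring,
        show θ₂ - θ₄ - (θ₂ - θ₃) = θ₃ - θ₄ from by ring, ← hf23, ← hf34]
      linarith
    have h2 : θ₃ - θ₅ ≤ θ₁ - θ₃ := by
      refine order_key (T := θ₁ - θ₅) (by linarith) ⟨by linarith, by linarith⟩
        ⟨by linarith, by linarith⟩ ?_
      rw [show θ₁ - θ₅ - (θ₁ - θ₃) = θ₃ - θ₅ from by ring,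
        show θ₁ - θ₅ - (θ₃ - θ₅) = θ₁ - θ₃ from by ring, ← hf13, ← hf35]
      linarith
    have h3 : θ₁ - θ₂ ≤ θ₄ - θ₅ := by
      refine order_key (T := θ₁ - θ₅) (by linarith) ⟨by linarith, by linarith⟩
        ⟨by linarith, by linarith⟩ ?_
      rw [show θ₁ - θ₅ - (θ₄ - θ₅) = θ₁ - θ₄ from by ring,
        show θ₁ - θ₅ - (θ₁ - θ₂) = θ₂ - θ₅ from by ring, ← hf12, ← hf14, ← hf25, ← hf45]
      linarith
    constructor <;> linarith
  · -- f23 ≤ f34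
    have key1 : m 0 * (f35 - f13) = m 1 * (f23 - f34) := by linear_combination e3
    have key2 : m 0 * (f12 + f14 - f25 - f45) = m 2 * (f23 - f34) := by
      linear_combination -e2 - e4
    have hQ : f35 - f13 ≤ 0 := by
      have h' : m 0 * (f35 - f13) ≤ m 0 * 0 := by
        rw [mul_zero, key1]; exact mul_nonpos_of_nonneg_of_nonpos hm2.le hR
      exact le_of_mul_le_mul_left h' hm1
    have hP : f12 + f14 - f25 - f45 ≤ 0 := by
      have h' : m 0 * (f12 + f14 - f25 - f45) ≤ m 0 * 0 := by
        rw [mul_zero, key2]; exact mul_nonpos_of_nonneg_of_nonpos hm3.le hR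
      exact le_of_mul_le_mul_left h' hm1
    have h1 : θ₃ - θ₄ ≤ θ₂ - θ₃ := by
      refine order_key (T := θ₂ - θ₄) (by linarith) ⟨by linarith, by linarith⟩
        ⟨by linarith, by linarith⟩ ?_
      rw [show θ₂ - θ₄ - (θ₂ - θ₃) = θ₃ - θ₄ from by ring,
        show θ₂ - θ₄ - (θ₃ - θ₄) = θ₂ - θ₃ from by ring, ← hf23, ← hf34]
      linarith
    have h2 : θ₁ - θ₃ ≤ θ₃ - θ₅ := by
      refine order_key (T := θ₁ - θ₅) (by linarith) ⟨by linarith, by linarith⟩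
        ⟨by linarith, by linarith⟩ ?_
      rw [show θ₁ - θ₅ - (θ₃ - θ₅) = θ₁ - θ₃ from by ring,
        show θ₁ - θ₅ - (θ₁ - θ₃) = θ₃ - θ₅ from by ring, ← hf13, ← hf35]
      linarith
    have h3 : θ₄ - θ₅ ≤ θ₁ - θ₂ := by
      refine order_key (T := θ₁ - θ₅) (by linarith) ⟨by linarith, by linarith⟩
        ⟨by linarith, by linarith⟩ ?_
      rw [show θ₁ - θ₅ - (θ₁ - θ₂) = θ₂ - θ₅ from by ring,
        show θ₁ - θ₅ - (θ₄ - θ₅) = θ₁ - θ₄ from by ring, ← hf12, ← hf14, ← hf25, ← hf45]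
      linarith
    constructor <;> linarith
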